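/- There do not exist a₀, a₃ ∈ ℂ such that every sequence z : ℕ → ℂ with z n ≠ 0 for all n that satisfies the third-order recursion z_{n+3} = (a₃·z_n + z_{n+2} + a₀)/z_n for all n is periodic with period 12 (i.e. z_{n+12} = z_n for all n). -/

import Mathlib

open Polynomial

noncomputable def pqStep (a b : ℂ) (s : (ℂ[X] × ℂ[X]) × (ℂ[X] × ℂ[X]) × (ℂ[X] × ℂ[X])) :
    (ℂ[X] × ℂ[X]) × (ℂ[X] × ℂ[X]) × (ℂ[X] × ℂ[X]) :=
  (s.2.1, s.2.2,
    (s.2.2.1 * s.1.2 + C a * s.1.1 * s.2.2.2 + C b * s.1.2 * s.2.2.2, s.2.2.2 * s.1.1))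

noncomputable def pqW (a b : ℂ) (ini : (ℂ[X] × ℂ[X]) × (ℂ[X] × ℂ[X]) × (ℂ[X] × ℂ[X])) :
    ℕ → (ℂ[X] × ℂ[X]) × (ℂ[X] × ℂ[X]) × (ℂ[X] × ℂ[X])
  | 0 => ini
  | n + 1 => pqStep a b (pqW a b ini n)

noncomputable def epsW (a : ℂ) (p : ℕ → ℂ) : ℕ → ℂ × ℂ × ℂ
  | 0 => (1, 0, 0)
  | n + 1 => ((epsW a p n).2.1, (epsW a p n).2.2,
      ((epsW a p n).2.2 + (a - p n) * (epsW a p n).1) / p n)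

lemma key_lemma (a b : ℂ) (p ε : ℕ → ℂ)
    (hp3 : ∀ n, p (n + 3) = p n) (hp0 : ∀ n, p n ≠ 0)
    (hrec : ∀ n, p n * p n = a * p n + p (n + 2) + b)
    (heps : ∀ n, p n * ε (n + 3) = ε (n + 2) + (a - p n) * ε n)
    (hne : ε 12 ≠ ε 0)
    (H : ∀ z : ℕ → ℂ, (∀ n, z n ≠ 0) →
      (∀ n, z (n + 3) = (a * z n + z (n + 2) + b) / z n) → ∀ n, z (n + 12) = z n) :
    False := by
  classical
  set ini : (ℂ[X] × ℂ[X]) × (ℂ[X] × ℂ[X]) × (ℂ[X] × ℂ[X]) :=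
    ((C (p 0) + C (ε 0) * X, 1), (C (p 1) + C (ε 1) * X, 1), (C (p 2) + C (ε 2) * X, 1))
    with hini
  set P : ℕ → ℂ[X] := fun n => (pqW a b ini n).1.1 with hPdef
  set Q : ℕ → ℂ[X] := fun n => (pqW a b ini n).1.2 with hQdef
  have hP0 : P 0 = C (p 0) + C (ε 0) * X := rfl
  have hP1 : P 1 = C (p 1) + C (ε 1) * X := rfl
  have hP2 : P 2 = C (p 2) + C (ε 2) * X := rfl
  have hQ0 : Q 0 = 1 := rfl
  have hQ1 : Q 1 = 1 := rfl
  have hQ2 : Q 2 = 1 := rfl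
  have hP3 : ∀ n, P (n + 3) =
      P (n + 2) * Q n + C a * P n * Q (n + 2) + C b * Q n * Q (n + 2) := fun n => rfl
  have hQ3 : ∀ n, Q (n + 3) = Q (n + 2) * P n := fun n => rfl
  have inv3 : ∀ n,
      ((Q n).eval 0 ≠ 0 ∧ (P n).eval 0 = p n * (Q n).eval 0 ∧
        (P n).derivative.eval 0 - p n * (Q n).derivative.eval 0 = ε n * (Q n).eval 0) ∧
      ((Q (n + 1)).eval 0 ≠ 0 ∧ (P (n + 1)).eval 0 = p (n + 1) * (Q (n + 1)).eval 0 ∧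
        (P (n + 1)).derivative.eval 0 - p (n + 1) * (Q (n + 1)).derivative.eval 0
          = ε (n + 1) * (Q (n + 1)).eval 0) ∧
      ((Q (n + 2)).eval 0 ≠ 0 ∧ (P (n + 2)).eval 0 = p (n + 2) * (Q (n + 2)).eval 0 ∧
        (P (n + 2)).derivative.eval 0 - p (n + 2) * (Q (n + 2)).derivative.eval 0
          = ε (n + 2) * (Q (n + 2)).eval 0) := by
    intro n
    induction n with
    | zero =>
      simp only [Nat.zero_add]
      refine ⟨⟨?_, ?_, ?_⟩, ⟨?_, ?_, ?_⟩, ⟨?_, ?_, ?_⟩⟩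
      · rw [hQ0]; simp
      · rw [hP0, hQ0]; simp
      · rw [hP0, hQ0]; simp
      · rw [hQ1]; simp
      · rw [hP1, hQ1]; simp
      · rw [hP1, hQ1]; simp
      · rw [hQ2]; simp
      · rw [hP2, hQ2]; simp
      · rw [hP2, hQ2]; simp
    | succ m ih =>
      obtain ⟨⟨k0ne, hv0, hd0⟩, h1, ⟨k2ne, hv2, hd2⟩⟩ := ih
      have e1 : (Q (m + 3)).eval 0 = (Q (m + 2)).eval 0 * (P m).eval 0 := by
        rw [hQ3 m]; simp
      have e2 : (P (m + 3)).eval 0 = (P (m + 2)).eval 0 * (Q m).eval 0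
          + a * ((P m).eval 0) * ((Q (m + 2)).eval 0)
          + b * ((Q m).eval 0 * (Q (m + 2)).eval 0) := by
        rw [hP3 m]
        simp only [eval_add, eval_mul, eval_C]
        ring
      have e3 : (Q (m + 3)).derivative.eval 0 =
          (Q (m + 2)).derivative.eval 0 * (P m).eval 0
            + (Q (m + 2)).eval 0 * (P m).derivative.eval 0 := by
        rw [hQ3 m]
        simp only [derivative_mul, eval_add, eval_mul]
      have e4 : (P (m + 3)).derivative.eval 0 =
          (P (m + 2)).derivative.eval 0 * (Q m).eval 0
            + (P (m + 2)).eval 0 * (Q m).derivative.eval 0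
            + a * ((P m).derivative.eval 0 * (Q (m + 2)).eval 0
              + (P m).eval 0 * (Q (m + 2)).derivative.eval 0)
            + b * ((Q m).derivative.eval 0 * (Q (m + 2)).eval 0
              + (Q m).eval 0 * (Q (m + 2)).derivative.eval 0) := by
        rw [hP3 m]
        simp only [derivative_mul, derivative_add, derivative_C, eval_add, eval_mul, eval_C,
          zero_mul, zero_add, add_zero, mul_zero]
        ring
      have hnew : (Q (m + 3)).eval 0 ≠ 0 ∧ (P (m + 3)).eval 0 = p (m + 3) * (Q (m + 3)).eval 0 ∧
          (P (m + 3)).derivative.eval 0 - p (m + 3) * (Q (m + 3)).derivative.eval 0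
            = ε (m + 3) * (Q (m + 3)).eval 0 := by
        refine ⟨?_, ?_, ?_⟩
        · rw [e1, hv0]
          exact mul_ne_zero k2ne (mul_ne_zero (hp0 m) k0ne)
        · rw [e2, e1, hv0, hv2, hp3 m]
          linear_combination (-((Q m).eval 0 * (Q (m + 2)).eval 0)) * hrec m
        · rw [e4, e3, e1, hp3 m, hv0, hv2]
          linear_combination ((a - p m) * (Q (m + 2)).eval 0) * hd0
            + ((Q m).eval 0) * hd2
            - ((Q (m + 2)).eval 0 * (Q m).derivative.eval 0
                + (Q m).eval 0 * (Q (m + 2)).derivative.eval 0) * hrec m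
            - ((Q m).eval 0 * (Q (m + 2)).eval 0) * heps m
      exact ⟨h1, ⟨k2ne, hv2, hd2⟩, hnew⟩
  have inv : ∀ n, (Q n).eval 0 ≠ 0 ∧ (P n).eval 0 = p n * (Q n).eval 0 ∧
      (P n).derivative.eval 0 - p n * (Q n).derivative.eval 0 = ε n * (Q n).eval 0 :=
    fun n => (inv3 n).1
  have hkne : ∀ n, (Q n).eval 0 ≠ 0 := fun n => (inv n).1
  have hPe : ∀ n, (P n).eval 0 ≠ 0 := by
    intro n
    rw [(inv n).2.1]
    exact mul_ne_zero (hp0 n) (hkne n)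
  have hPnz : ∀ n, P n ≠ 0 := by
    intro n h
    exact hPe n (by rw [h]; simp)
  have hQnz : ∀ n, Q n ≠ 0 := by
    intro n h
    exact hkne n (by rw [h]; simp)
  have hp12 : p 12 = p 0 := (hp3 9).trans ((hp3 6).trans ((hp3 3).trans (hp3 0)))
  obtain ⟨k12ne, hv12, hd12⟩ := inv 12
  set D : ℂ[X] := P 12 * Q 0 - P 0 * Q 12 with hDdef
  have c1 : (Q 0).eval 0 = 1 := by rw [hQ0]; simp
  have c2 : (Q 0).derivative.eval 0 = 0 := by rw [hQ0]; simp
  have c3 : (P 0).eval 0 = p 0 := by rw [hP0]; simp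
  have c4 : (P 0).derivative.eval 0 = ε 0 := by rw [hP0]; simp
  have hDd : D.derivative.eval 0 = (ε 12 - ε 0) * (Q 12).eval 0 := by
    rw [hDdef, derivative_sub, derivative_mul, derivative_mul]
    simp only [eval_sub, eval_add, eval_mul]
    rw [c1, c2, c3, c4]
    rw [hp12] at hd12
    linear_combination hd12
  have hDne : D ≠ 0 := by
    intro h
    have h0 : (0 : ℂ) = (ε 12 - ε 0) * (Q 12).eval 0 := by
      rw [← hDd, h]; simp
    rcases mul_eq_zero.1 h0.symm with h' | h'
    · exact hne (sub_eq_zero.1 h')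
    · exact k12ne h'
  have hBadc : ({t : ℂ | D.eval t = 0} ∪
      ⋃ n : ℕ, ({t : ℂ | (P n).eval t = 0} ∪ {t : ℂ | (Q n).eval t = 0})).Countable := by
    refine Set.Countable.union (Polynomial.finite_setOf_isRoot hDne).countable ?_
    exact Set.countable_iUnion fun n =>
      ((Polynomial.finite_setOf_isRoot (hPnz n)).countable).union
        ((Polynomial.finite_setOf_isRoot (hQnz n)).countable)
  have hne_univ : ({t : ℂ | D.eval t = 0} ∪
      ⋃ n : ℕ, ({t : ℂ | (P n).eval t = 0} ∪ {t : ℂ | (Q n).eval t = 0})) ≠ Set.univ := by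
    intro h
    exact not_countable_complex (h ▸ hBadc)
  obtain ⟨t, ht⟩ := (Set.ne_univ_iff_exists_notMem _).1 hne_univ
  simp only [Set.mem_union, Set.mem_iUnion, Set.mem_setOf_eq] at ht
  push_neg at ht
  obtain ⟨htD, htPQ⟩ := ht
  set z : ℕ → ℂ := fun n => (P n).eval t / (Q n).eval t with hzdef
  have hz0 : ∀ n, z n ≠ 0 := fun n => div_ne_zero (htPQ n).1 (htPQ n).2
  have hzrec : ∀ n, z (n + 3) = (a * z n + z (n + 2) + b) / z n := by
    intro n
    have hqn := (htPQ n).2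
    have hq2 := (htPQ (n + 2)).2
    have hpn := (htPQ n).1
    have e2 : (P (n + 3)).eval t = (P (n + 2)).eval t * (Q n).eval t
        + a * ((P n).eval t) * ((Q (n + 2)).eval t)
        + b * ((Q n).eval t * (Q (n + 2)).eval t) := by
      rw [hP3 n]
      simp only [eval_add, eval_mul, eval_C]
      ring
    have e1 : (Q (n + 3)).eval t = (Q (n + 2)).eval t * (P n).eval t := by
      rw [hQ3 n]; simp
    show (P (n + 3)).eval t / (Q (n + 3)).eval t =
      (a * ((P n).eval t / (Q n).eval t) + (P (n + 2)).eval t / (Q (n + 2)).eval t + b) /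
        ((P n).eval t / (Q n).eval t)
    rw [e2, e1]
    field_simp
    ring
  have h12 : z 12 = z 0 := H z hz0 hzrec 0
  have h12' : (P 12).eval t * (Q 0).eval t = (P 0).eval t * (Q 12).eval t := by
    have hh : (P 12).eval t / (Q 12).eval t = (P 0).eval t / (Q 0).eval t := h12
    rw [div_eq_div_iff (htPQ 12).2 (htPQ 0).2] at hh
    linear_combination hh
  apply htD
  rw [hDdef]
  simp only [eval_sub, eval_mul]
  linear_combination h12'

lemma exists_good_root (a c : ℂ) (hc : c ≠ 0) :
    ∃ r : ℂ, c * (r * r * r) = r * r + (a - c) ∧ r ^ 12 ≠ 1 := by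
  classical
  set P : Cubic ℂ := ⟨c, -1, 0, c - a⟩ with hPdef
  have ha : P.a ≠ 0 := hc
  have h0 : P.toPoly ≠ 0 := Cubic.ne_zero_of_a_ne_zero ha
  have hsp : Polynomial.Splits (P.toPoly.map (RingHom.id ℂ)) := IsAlgClosed.splits _
  obtain ⟨r1, r2, r3, h3⟩ := (Cubic.splits_iff_roots_eq_three ha).1 hsp
  have hmapid : Cubic.map (RingHom.id ℂ) P = P := by
    simp [Cubic.map]
  have h3' : P.roots = {r1, r2, r3} := by rw [← hmapid]; exact h3
  have hroot : ∀ r ∈ P.roots, c * (r * r * r) = r * r + (a - c) := by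
    intro r hr
    have hh := (Cubic.mem_roots_iff h0 r).1 hr
    have hh' : c * r ^ 3 + (-1) * r ^ 2 + 0 * r + (c - a) = 0 := hh
    linear_combination hh'
  have hm1 : r1 ∈ P.roots := by rw [h3']; simp
  have hm2 : r2 ∈ P.roots := by rw [h3']; simp
  have hm3 : r3 ∈ P.roots := by rw [h3']; simp
  have hr1 := hroot r1 hm1
  have hr2 := hroot r2 hm2
  have hr3 := hroot r3 hm3
  by_cases h12a : r1 ^ 12 = 1
  · by_cases h12b : r2 ^ 12 = 1
    · by_cases h12c : r3 ^ 12 = 1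
      · exfalso
        have unit : ∀ r : ℂ, r ^ 12 = 1 → r * (starRingEnd ℂ) r = 1 := by
          intro r h
          have h1 : Complex.normSq r ^ 12 = 1 := by
            rw [← map_pow, h, map_one]
          have h2 : Complex.normSq r = 1 := by
            rcases lt_trichotomy (Complex.normSq r) 1 with hlt | heq | hgt
            · have := pow_lt_one₀ (Complex.normSq_nonneg r) hlt
                (by norm_num : (12 : ℕ) ≠ 0)
              rw [h1] at this
              exact absurd this (lt_irrefl 1)
            · exact heq
            · have := one_lt_pow₀ hgt (by norm_num : (12 : ℕ) ≠ 0)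
              rw [h1] at this
              exact absurd this (lt_irrefl 1)
          rw [Complex.mul_conj, h2]
          norm_num
        have hu1 := unit r1 h12a
        have hu2 := unit r2 h12b
        have hu3 := unit r3 h12c
        have hner : ∀ r : ℂ, r * (starRingEnd ℂ) r = 1 → r ≠ 0 := by
          intro r h hr0
          rw [hr0] at h
          simp at h
        have hn1 := hner r1 hu1
        have hn2 := hner r2 hu2
        have hn3 := hner r3 hu3
        have hb : ((RingHom.id ℂ) P.b) = (RingHom.id ℂ) P.a * -(r1 + r2 + r3) :=
          Cubic.b_eq_three_roots ha h3
        have hcc : ((RingHom.id ℂ) P.c) = (RingHom.id ℂ) P.a * (r1 * r2 + r1 * r3 + r2 * r3) :=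
          Cubic.c_eq_three_roots ha h3
        have hb' : (-1 : ℂ) = c * -(r1 + r2 + r3) := hb
        have hcc' : (0 : ℂ) = c * (r1 * r2 + r1 * r3 + r2 * r3) := hcc
        have he2 : r1 * r2 + r1 * r3 + r2 * r3 = 0 :=
          (mul_eq_zero.1 hcc'.symm).resolve_left hc
        have hsum : (r1 * r2 * r3) *
            ((starRingEnd ℂ) r1 + (starRingEnd ℂ) r2 + (starRingEnd ℂ) r3)
              = r1 * r2 + r1 * r3 + r2 * r3 := by
          linear_combination (r2 * r3) * hu1 + (r1 * r3) * hu2 + (r1 * r2) * hu3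
        rw [he2] at hsum
        have hzero : (starRingEnd ℂ) r1 + (starRingEnd ℂ) r2 + (starRingEnd ℂ) r3 = 0 :=
          (mul_eq_zero.1 hsum).resolve_left (mul_ne_zero (mul_ne_zero hn1 hn2) hn3)
        have hzero' : r1 + r2 + r3 = 0 := by
          have hcg := congrArg (starRingEnd ℂ) hzero
          simpa [map_add, Complex.conj_conj] using hcg
        rw [hzero'] at hb'
        norm_num at hb'
      · exact ⟨r3, hr3, h12c⟩
    · exact ⟨r2, hr2, h12b⟩
  · exact ⟨r1, hr1, h12a⟩

theorem no_type_two_period_twelve :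
    ¬ ∃ a₀ a₃ : ℂ, ∀ z : ℕ → ℂ, (∀ n, z n ≠ 0) →
      (∀ n, z (n + 3) = (a₃ * z n + z (n + 2) + a₀) / z n) →
      ∀ n, z (n + 12) = z n := by
  rintro ⟨b, a, H⟩
  by_cases hsp : b = 0 ∧ a = -1
  · obtain ⟨hb0, ha1⟩ := hsp
    subst hb0
    subst ha1
    obtain ⟨x, hx⟩ : ∃ x : ℂ,
        x ^ 6 + 4 * x ^ 5 + 8 * x ^ 4 + 10 * x ^ 3 + 9 * x ^ 2 + 6 * x + 3 = 0 := by
      have hdeg : (X ^ 6 + C 4 * X ^ 5 + C 8 * X ^ 4 + C 10 * X ^ 3 + C 9 * X ^ 2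
          + C 6 * X + C 3 : ℂ[X]).degree = 6 := by
        compute_degree!
      obtain ⟨x, hx⟩ := Complex.exists_root (f := X ^ 6 + C 4 * X ^ 5 + C 8 * X ^ 4
        + C 10 * X ^ 3 + C 9 * X ^ 2 + C 6 * X + C 3) (by rw [hdeg]; norm_num)
      refine ⟨x, ?_⟩
      have := hx
      simp only [Polynomial.IsRoot, eval_add, eval_mul, eval_pow, eval_C, eval_X] at this
      linear_combination this
    have hx0 : x ≠ 0 := by
      intro h
      rw [h] at hx
      norm_num at hx
    have hx1 : x + 1 ≠ 0 := by
      intro h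
      have hxm : x = -1 := by linear_combination h
      rw [hxm] at hx
      norm_num at hx
    have hx2 : x ^ 2 + x + 1 ≠ 0 := by
      intro h
      have hcon : (1 : ℂ) = 0 := by
        linear_combination (-x) * hx
          + ((1 : ℂ) + 2 * x + 3 * x ^ 2 + 4 * x ^ 3 + 3 * x ^ 4 + x ^ 5) * h
      exact one_ne_zero hcon
    have hYne : x ^ 4 + 2 * x ^ 3 + 2 * x ^ 2 + x ≠ 0 := by
      have e : x ^ 4 + 2 * x ^ 3 + 2 * x ^ 2 + x = x * ((x + 1) * (x ^ 2 + x + 1)) := by ring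
      rw [e]
      exact mul_ne_zero hx0 (mul_ne_zero hx1 hx2)
    have hWne : x ^ 2 + x ≠ 0 := by
      have e : x ^ 2 + x = x * (x + 1) := by ring
      rw [e]
      exact mul_ne_zero hx0 hx1
    set p : ℕ → ℂ := fun n =>
      if n % 3 = 0 then x else if n % 3 = 1 then x ^ 4 + 2 * x ^ 3 + 2 * x ^ 2 + x
      else x ^ 2 + x with hp
    have hp3 : ∀ n, p (n + 3) = p n := by
      intro n
      have hmod : (n + 3) % 3 = n % 3 := Nat.add_mod_right n 3
      simp only [hp, hmod]
    have hp0 : ∀ n, p n ≠ 0 := by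
      intro n
      have h3 : n % 3 = 0 ∨ n % 3 = 1 ∨ n % 3 = 2 := by omega
      rcases h3 with h | h | h
      · simpa [hp, h] using hx0
      · simpa [hp, h] using hYne
      · simpa [hp, h] using hWne
    have hrec : ∀ n, p n * p n = (-1) * p n + p (n + 2) + 0 := by
      intro n
      have h3 : n % 3 = 0 ∨ n % 3 = 1 ∨ n % 3 = 2 := by omega
      rcases h3 with h | h | h
      · have h2 : (n + 2) % 3 = 2 := by omega
        simp only [hp, h, h2]
        norm_num
        ring
      · have h2 : (n + 2) % 3 = 0 := by omega
        simp only [hp, h, h2]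
        norm_num
        linear_combination x ^ 2 * hx
      · have h2 : (n + 2) % 3 = 1 := by omega
        simp only [hp, h, h2]
        norm_num
        ring
    set ε : ℕ → ℂ := fun n => (epsW (-1) p n).1 with hedef
    have heps : ∀ n, p n * ε (n + 3) = ε (n + 2) + (-1 - p n) * ε n := by
      intro n
      have h1 : ε (n + 3) = (ε (n + 2) + (-1 - p n) * ε n) / p n := rfl
      rw [h1, ← mul_div_assoc]
      exact mul_div_cancel_left₀ _ (hp0 n)
    have pv0 : p 0 = x := by norm_num [hp]
    have pv1 : p 1 = x ^ 4 + 2 * x ^ 3 + 2 * x ^ 2 + x := by norm_num [hp]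
    have pv2 : p 2 = x ^ 2 + x := by norm_num [hp]
    have pv3 : p 3 = x := by norm_num [hp]
    have pv4 : p 4 = x ^ 4 + 2 * x ^ 3 + 2 * x ^ 2 + x := by norm_num [hp]
    have pv5 : p 5 = x ^ 2 + x := by norm_num [hp]
    have pv6 : p 6 = x := by norm_num [hp]
    have pv7 : p 7 = x ^ 4 + 2 * x ^ 3 + 2 * x ^ 2 + x := by norm_num [hp]
    have pv8 : p 8 = x ^ 2 + x := by norm_num [hp]
    have pv9 : p 9 = x := by norm_num [hp]
    have hv0 : ε 0 = 1 := rfl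
    have hv1 : ε 1 = 0 := rfl
    have hv2 : ε 2 = 0 := rfl
    have hv3 : ε 3 = (1 : ℂ) + (3 : ℂ) * x + ((10 : ℂ)/3) * x ^ 2 + ((8 : ℂ)/3) * x ^ 3 + ((4 : ℂ)/3) * x ^ 4 + ((1 : ℂ)/3) * x ^ 5 := by
      have h : p 0 * ε 3 = ε 2 + (-1 - p 0) * ε 0 := heps 0
      rw [pv0, hv2, hv0] at h
      have h2 : (x) * ε 3 = (x) * ((1 : ℂ) + (3 : ℂ) * x + ((10 : ℂ)/3) * x ^ 2 + ((8 : ℂ)/3) * x ^ 3 + ((4 : ℂ)/3) * x ^ 4 + ((1 : ℂ)/3) * x ^ 5) := by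
        rw [h]
        linear_combination (((-1 : ℂ)/3)) * hx
      exact mul_left_cancel₀ hx0 h2
    have hv4 : ε 4 = ((-2 : ℂ)/3) * x + ((-1 : ℂ)/3) * x ^ 2 + ((1 : ℂ)/3) * x ^ 3 + ((1 : ℂ)/3) * x ^ 4 := by
      have h : p 1 * ε 4 = ε 3 + (-1 - p 1) * ε 1 := heps 1
      rw [pv1, hv3, hv1] at h
      have h2 : (x ^ 4 + 2 * x ^ 3 + 2 * x ^ 2 + x) * ε 4 = (x ^ 4 + 2 * x ^ 3 + 2 * x ^ 2 + x) * (((-2 : ℂ)/3) * x + ((-1 : ℂ)/3) * x ^ 2 + ((1 : ℂ)/3) * x ^ 3 + ((1 : ℂ)/3) * x ^ 4) := by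
        rw [h]
        linear_combination (((1 : ℂ)/3) + ((1 : ℂ)/3) * x + ((-1 : ℂ)/3) * x ^ 2) * hx
      exact mul_left_cancel₀ hYne h2
    have hv5 : ε 5 = ((1 : ℂ)/3) + ((4 : ℂ)/3) * x + (2 : ℂ) * x ^ 2 + ((5 : ℂ)/3) * x ^ 3 + (1 : ℂ) * x ^ 4 + ((1 : ℂ)/3) * x ^ 5 := by
      have h : p 2 * ε 5 = ε 4 + (-1 - p 2) * ε 2 := heps 2
      rw [pv2, hv4, hv2] at h
      have h2 : (x ^ 2 + x) * ε 5 = (x ^ 2 + x) * (((1 : ℂ)/3) + ((4 : ℂ)/3) * x + (2 : ℂ) * x ^ 2 + ((5 : ℂ)/3) * x ^ 3 + (1 : ℂ) * x ^ 4 + ((1 : ℂ)/3) * x ^ 5) := by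
        rw [h]
        linear_combination (((-1 : ℂ)/3) * x) * hx
      exact mul_left_cancel₀ hWne h2
    have hv6 : ε 6 = ((-4 : ℂ)/3) + ((-7 : ℂ)/3) * x + ((-19 : ℂ)/9) * x ^ 2 + ((-11 : ℂ)/9) * x ^ 3 + ((-4 : ℂ)/9) * x ^ 4 + ((-1 : ℂ)/9) * x ^ 5 := by
      have h : p 3 * ε 6 = ε 5 + (-1 - p 3) * ε 3 := heps 3
      rw [pv3, hv5, hv3] at h
      have h2 : (x) * ε 6 = (x) * (((-4 : ℂ)/3) + ((-7 : ℂ)/3) * x + ((-19 : ℂ)/9) * x ^ 2 + ((-11 : ℂ)/9) * x ^ 3 + ((-4 : ℂ)/9) * x ^ 4 + ((-1 : ℂ)/9) * x ^ 5) := by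
        rw [h]
        linear_combination (((-2 : ℂ)/9)) * hx
      exact mul_left_cancel₀ hx0 h2
    have hv7 : ε 7 = ((1 : ℂ)/3) + ((14 : ℂ)/9) * x + ((10 : ℂ)/9) * x ^ 2 + ((5 : ℂ)/9) * x ^ 3 + ((5 : ℂ)/9) * x ^ 4 + ((1 : ℂ)/3) * x ^ 5 := by
      have h : p 4 * ε 7 = ε 6 + (-1 - p 4) * ε 4 := heps 4
      rw [pv4, hv6, hv4] at h
      have h2 : (x ^ 4 + 2 * x ^ 3 + 2 * x ^ 2 + x) * ε 7 = (x ^ 4 + 2 * x ^ 3 + 2 * x ^ 2 + x) * (((1 : ℂ)/3) + ((14 : ℂ)/9) * x + ((10 : ℂ)/9) * x ^ 2 + ((5 : ℂ)/9) * x ^ 3 + ((5 : ℂ)/9) * x ^ 4 + ((1 : ℂ)/3) * x ^ 5) := by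
        rw [h]
        linear_combination (((-4 : ℂ)/9) + ((2 : ℂ)/9) * x + ((-2 : ℂ)/9) * x ^ 2 + ((-1 : ℂ)/3) * x ^ 3) * hx
      exact mul_left_cancel₀ hYne h2
    have hv8 : ε 8 = ((-13 : ℂ)/9) + ((-34 : ℂ)/9) * x + ((-14 : ℂ)/3) * x ^ 2 + ((-35 : ℂ)/9) * x ^ 3 + ((-7 : ℂ)/3) * x ^ 4 + ((-7 : ℂ)/9) * x ^ 5 := by
      have h : p 5 * ε 8 = ε 7 + (-1 - p 5) * ε 5 := heps 5
      rw [pv5, hv7, hv5] at h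
      have h2 : (x ^ 2 + x) * ε 8 = (x ^ 2 + x) * (((-13 : ℂ)/9) + ((-34 : ℂ)/9) * x + ((-14 : ℂ)/3) * x ^ 2 + ((-35 : ℂ)/9) * x ^ 3 + ((-7 : ℂ)/3) * x ^ 4 + ((-7 : ℂ)/9) * x ^ 5) := by
        rw [h]
        linear_combination (((4 : ℂ)/9) * x) * hx
      exact mul_left_cancel₀ hWne h2
    have hv9 : ε 9 = ((1 : ℂ)/9) + ((1 : ℂ)/9) * x + ((-5 : ℂ)/27) * x ^ 2 + ((-10 : ℂ)/27) * x ^ 3 + ((-2 : ℂ)/27) * x ^ 4 + ((4 : ℂ)/27) * x ^ 5 := by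
      have h : p 6 * ε 9 = ε 8 + (-1 - p 6) * ε 6 := heps 6
      rw [pv6, hv8, hv6] at h
      have h2 : (x) * ε 9 = (x) * (((1 : ℂ)/9) + ((1 : ℂ)/9) * x + ((-5 : ℂ)/27) * x ^ 2 + ((-10 : ℂ)/27) * x ^ 3 + ((-2 : ℂ)/27) * x ^ 4 + ((4 : ℂ)/27) * x ^ 5) := by
        rw [h]
        linear_combination (((-1 : ℂ)/27)) * hx
      exact mul_left_cancel₀ hx0 h2
    have hv10 : ε 10 = ((-13 : ℂ)/9) + ((-83 : ℂ)/27) * x + ((-94 : ℂ)/27) * x ^ 2 + ((-92 : ℂ)/27) * x ^ 3 + ((-65 : ℂ)/27) * x ^ 4 + ((-7 : ℂ)/9) * x ^ 5 := by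
      have h : p 7 * ε 10 = ε 9 + (-1 - p 7) * ε 7 := heps 7
      rw [pv7, hv9, hv7] at h
      have h2 : (x ^ 4 + 2 * x ^ 3 + 2 * x ^ 2 + x) * ε 10 = (x ^ 4 + 2 * x ^ 3 + 2 * x ^ 2 + x) * (((-13 : ℂ)/9) + ((-83 : ℂ)/27) * x + ((-94 : ℂ)/27) * x ^ 2 + ((-92 : ℂ)/27) * x ^ 3 + ((-65 : ℂ)/27) * x ^ 4 + ((-7 : ℂ)/9) * x ^ 5) := by
        rw [h]
        linear_combination (((-2 : ℂ)/27) + ((1 : ℂ)/27) * x + ((26 : ℂ)/27) * x ^ 2 + ((4 : ℂ)/9) * x ^ 3) * hx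
      exact mul_left_cancel₀ hYne h2
    have hv11 : ε 11 = ((52 : ℂ)/27) + ((109 : ℂ)/27) * x + ((38 : ℂ)/9) * x ^ 2 + ((95 : ℂ)/27) * x ^ 3 + ((19 : ℂ)/9) * x ^ 4 + ((19 : ℂ)/27) * x ^ 5 := by
      have h : p 8 * ε 11 = ε 10 + (-1 - p 8) * ε 8 := heps 8
      rw [pv8, hv10, hv8] at h
      have h2 : (x ^ 2 + x) * ε 11 = (x ^ 2 + x) * (((52 : ℂ)/27) + ((109 : ℂ)/27) * x + ((38 : ℂ)/9) * x ^ 2 + ((95 : ℂ)/27) * x ^ 3 + ((19 : ℂ)/9) * x ^ 4 + ((19 : ℂ)/27) * x ^ 5) := by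
        rw [h]
        linear_combination (((2 : ℂ)/27) * x) * hx
      exact mul_left_cancel₀ hWne h2
    have hv12 : ε 12 = ((5 : ℂ)/27) + ((-31 : ℂ)/27) * x + ((-160 : ℂ)/81) * x ^ 2 + ((-185 : ℂ)/81) * x ^ 3 + ((-145 : ℂ)/81) * x ^ 4 + ((-61 : ℂ)/81) * x ^ 5 := by
      have h : p 9 * ε 12 = ε 11 + (-1 - p 9) * ε 9 := heps 9
      rw [pv9, hv11, hv9] at h
      have h2 : (x) * ε 12 = (x) * (((5 : ℂ)/27) + ((-31 : ℂ)/27) * x + ((-160 : ℂ)/81) * x ^ 2 + ((-185 : ℂ)/81) * x ^ 3 + ((-145 : ℂ)/81) * x ^ 4 + ((-61 : ℂ)/81) * x ^ 5) := by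
        rw [h]
        linear_combination (((49 : ℂ)/81)) * hx
      exact mul_left_cancel₀ hx0 h2
    have hne : ε 12 ≠ ε 0 := by
      rw [hv12, hv0]
      intro hB
      have hcon : (1 : ℂ) = 0 := by
        linear_combination (((-88 : ℂ)/801) + ((-56863 : ℂ)/52866) * x + ((1453 : ℂ)/26433) * x ^ 2 + ((-14471 : ℂ)/79299) * x ^ 3 + ((-54595 : ℂ)/158598) * x ^ 4) * hx + (((-3195 : ℂ)/1958) + ((-2418 : ℂ)/979) * x + ((-1464 : ℂ)/979) * x ^ 2 + ((-810 : ℂ)/979) * x ^ 3 + ((-1927 : ℂ)/1958) * x ^ 4 + ((-895 : ℂ)/1958) * x ^ 5) * hB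
      exact one_ne_zero hcon
    exact key_lemma (-1) 0 p ε hp3 hp0 hrec heps hne H
  · have hcex : ∃ c : ℂ, c ≠ 0 ∧ c * c = a * c + c + b := by
      by_cases hb : b = 0
      · subst hb
        have ha : a ≠ -1 := fun h => hsp ⟨rfl, h⟩
        exact ⟨a + 1, fun h => ha (by linear_combination h), by ring⟩
      · obtain ⟨s, hs⟩ := IsAlgClosed.exists_pow_nat_eq ((a + 1) ^ 2 + 4 * b)
          (n := 2) (by norm_num)
        refine ⟨(a + 1 + s) / 2, ?_, by linear_combination hs / 4⟩
        intro h
        apply hb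
        have hs' : s = -(a + 1) := by linear_combination 2 * h
        rw [hs'] at hs
        linear_combination (-1 / 4 : ℂ) * hs
    obtain ⟨c, hc0, hcq⟩ := hcex
    obtain ⟨r, hr, hr12⟩ := exists_good_root a c hc0
    refine key_lemma a b (fun _ => c) (fun n => r ^ n) (fun n => rfl) (fun n => hc0)
      (fun n => hcq) ?_ ?_ H
    · intro n
      show c * r ^ (n + 3) = r ^ (n + 2) + (a - c) * r ^ n
      rw [pow_add, pow_add]
      linear_combination (r ^ n) * hr
    · show r ^ 12 ≠ r ^ 0
      rw [pow_zero]
      exact hr12
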